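/- Let F be a field and L a Lie algebra over F admitting a basis e₁, e₂, e₃, e₄ whose brackets satisfy ⁅e₁,e₂⁆ = e₂, ⁅e₃,e₄⁆ = e₄, and ⁅e₁,e₃⁆ = ⁅e₁,e₄⁆ = ⁅e₂,e₃⁆ = ⁅e₂,e₄⁆ = 0. Then the commuting graph Γ(L) is connected and diam(Γ(L)) = 3. -/

import Mathlib

/-- The commuting graph of a Lie algebra `L` over `F`: vertices are the elements of
`L` outside the center, and two distinct vertices are adjacent iff they commute. -/
def commutingGraph (F : Type*) [CommRing F] (L : Type*) [LieRing L] [LieAlgebra F L] :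
    SimpleGraph {x : L // x ∉ LieAlgebra.center F L} where
  Adj x y := x ≠ y ∧ ⁅(x : L), (y : L)⁆ = 0
  symm := ⟨fun x y h => ⟨h.1.symm, by rw [← lie_skew, h.2, neg_zero]⟩⟩
  loopless := ⟨fun x h => h.1 rfl⟩

section Aux
variable {F : Type*} [Field F] {L : Type*} [LieRing L] [LieAlgebra F L]
  (b : Module.Basis (Fin 4) F L)

lemma comb_eq_zero {a c : F} (h : a • b 1 + c • b 3 = 0) : a = 0 ∧ c = 0 := by
  have h1 := congrArg (fun z => b.repr z 1) h
  have h3 := congrArg (fun z => b.repr z 3) h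
  simp [Finsupp.single_apply] at h1 h3
  exact ⟨h1, h3⟩

lemma eq_zero_of_repr {x : L} (h : ∀ i, b.repr x i = 0) : x = 0 := by
  have : b.repr x = 0 := Finsupp.ext h
  simpa using congrArg b.repr.symm this

lemma eq_proj1 {x : L} (h2 : b.repr x 2 = 0) (h3 : b.repr x 3 = 0) :
    x = b.repr x 0 • b 0 + b.repr x 1 • b 1 := by
  conv_lhs => rw [← b.sum_repr x]
  rw [Fin.sum_univ_four, h2, h3]
  simp

lemma eq_proj2 {x : L} (h0 : b.repr x 0 = 0) (h1 : b.repr x 1 = 0) :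
    x = b.repr x 2 • b 2 + b.repr x 3 • b 3 := by
  conv_lhs => rw [← b.sum_repr x]
  rw [Fin.sum_univ_four, h0, h1]
  simp

variable
  (h12 : ⁅b 0, b 1⁆ = b 1) (h34 : ⁅b 2, b 3⁆ = b 3)
  (h13 : ⁅b 0, b 2⁆ = 0) (h14 : ⁅b 0, b 3⁆ = 0)
  (h23 : ⁅b 1, b 2⁆ = 0) (h24 : ⁅b 1, b 3⁆ = 0)

include h12 h34 h13 h14 h23 h24

lemma bracket_eq (x y : L) :
    ⁅x, y⁆ = (b.repr x 0 * b.repr y 1 - b.repr x 1 * b.repr y 0) • b 1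
      + (b.repr x 2 * b.repr y 3 - b.repr x 3 * b.repr y 2) • b 3 := by
  have h21 : ⁅b 1, b 0⁆ = -b 1 := by rw [← lie_skew, h12]
  have h43 : ⁅b 3, b 2⁆ = -b 3 := by rw [← lie_skew, h34]
  have h31 : ⁅b 2, b 0⁆ = 0 := by rw [← lie_skew, h13, neg_zero]
  have h41 : ⁅b 3, b 0⁆ = 0 := by rw [← lie_skew, h14, neg_zero]
  have h32 : ⁅b 2, b 1⁆ = 0 := by rw [← lie_skew, h23, neg_zero]
  have h42 : ⁅b 3, b 1⁆ = 0 := by rw [← lie_skew, h24, neg_zero]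
  conv_lhs => rw [← b.sum_repr x, ← b.sum_repr y]
  rw [Fin.sum_univ_four, Fin.sum_univ_four]
  simp only [add_lie, lie_add, smul_lie, lie_smul, h12, h34, h13, h14, h23, h24,
    h21, h43, h31, h41, h32, h42, lie_self, smul_zero, smul_neg, add_zero, zero_add]
  module

lemma bracket_eq_zero_iff (x y : L) :
    ⁅x, y⁆ = 0 ↔ (b.repr x 0 * b.repr y 1 - b.repr x 1 * b.repr y 0 = 0 ∧
      b.repr x 2 * b.repr y 3 - b.repr x 3 * b.repr y 2 = 0) := by
  rw [bracket_eq b h12 h34 h13 h14 h23 h24]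
  constructor
  · exact fun h => comb_eq_zero b h
  · rintro ⟨e1, e2⟩; rw [e1, e2]; simp

lemma mem_center_eq_zero {x : L} (hx : x ∈ LieAlgebra.center F L) : x = 0 := by
  rw [LieModule.mem_maxTrivSubmodule] at hx
  apply eq_zero_of_repr b
  have c0 := (bracket_eq_zero_iff b h12 h34 h13 h14 h23 h24 (b 0) x).mp (hx (b 0))
  have c1 := (bracket_eq_zero_iff b h12 h34 h13 h14 h23 h24 (b 1) x).mp (hx (b 1))
  have c2 := (bracket_eq_zero_iff b h12 h34 h13 h14 h23 h24 (b 2) x).mp (hx (b 2))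
  have c3 := (bracket_eq_zero_iff b h12 h34 h13 h14 h23 h24 (b 3) x).mp (hx (b 3))
  simp [Finsupp.single_apply] at c0 c1 c2 c3
  intro i
  fin_cases i <;> simp [c0, c1, c2, c3]

lemma not_mem_center_of_ne {x : L} (hx : x ≠ 0) : x ∉ LieAlgebra.center F L :=
  fun h => hx (mem_center_eq_zero b h12 h34 h13 h14 h23 h24 h)

omit h12 h34 h13 h14 h23 h24 in
lemma vert_ne_zero {x : L} (hx : x ∉ LieAlgebra.center F L) : x ≠ 0 := by
  rintro rfl; exact hx (LieAlgebra.center F L).zero_mem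

end Aux

lemma adj_adj_of_edist_eq_two {V : Type*} {G : SimpleGraph V} {u v : V}
    (h : G.edist u v = 2) : ∃ z, G.Adj u z ∧ G.Adj z v := by
  obtain ⟨p, hp⟩ := SimpleGraph.exists_walk_of_edist_eq_coe h
  cases p with
  | nil => simp at hp
  | cons ha q =>
    cases q with
    | nil => simp at hp
    | cons hb q2 =>
      cases q2 with
      | nil => exact ⟨_, ha, hb⟩
      | cons hc q3 =>
        simp only [SimpleGraph.Walk.length_cons] at hp
        omega

set_option maxHeartbeats 2000000 in
/-- for a Lie algebra over a field `F` with basis `e₁, e₂, e₃, e₄` satisfying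
`⁅e₁,e₂⁆ = e₂`, `⁅e₃,e₄⁆ = e₄` and all cross brackets zero (the direct sum of two copies of
the nonabelian 2-dimensional Lie algebra), the commuting graph is connected of diameter 3. -/
theorem stmt2 (F : Type*) [Field F] (L : Type*) [LieRing L] [LieAlgebra F L]
    (b : Module.Basis (Fin 4) F L)
    (h12 : ⁅b 0, b 1⁆ = b 1) (h34 : ⁅b 2, b 3⁆ = b 3)
    (h13 : ⁅b 0, b 2⁆ = 0) (h14 : ⁅b 0, b 3⁆ = 0)
    (h23 : ⁅b 1, b 2⁆ = 0) (h24 : ⁅b 1, b 3⁆ = 0) :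
    (commutingGraph F L).Connected ∧ (commutingGraph F L).ediam = 3 := by
  set G := commutingGraph F L with hGdef
  have hbz := bracket_eq_zero_iff b h12 h34 h13 h14 h23 h24
  have hzero : ∀ {w : L}, w ≠ 0 → w ∉ LieAlgebra.center F L :=
    fun hw => not_mem_center_of_ne b h12 h34 h13 h14 h23 h24 hw
  -- adjacency constructor
  have adj_of : ∀ {w z : L} (hw : w ∉ LieAlgebra.center F L) (hz : z ∉ LieAlgebra.center F L),
      w ≠ z → b.repr w 0 * b.repr z 1 - b.repr w 1 * b.repr z 0 = 0 →
      b.repr w 2 * b.repr z 3 - b.repr w 3 * b.repr z 2 = 0 →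
      G.Adj ⟨w, hw⟩ ⟨z, hz⟩ := by
    intro w z hw hz hne e1 e2
    exact ⟨fun h => hne (congrArg Subtype.val h), (hbz w z).mpr ⟨e1, e2⟩⟩
  have dle1 : ∀ {a c : {x : L // x ∉ LieAlgebra.center F L}}, G.Adj a c → G.edist a c ≤ 1 :=
    fun h => le_of_eq (SimpleGraph.edist_eq_one_iff_adj.mpr h)
  have tri3 : ∀ (a z1 z2 c : {x : L // x ∉ LieAlgebra.center F L}),
      G.edist a z1 ≤ 1 → G.edist z1 z2 ≤ 1 → G.edist z2 c ≤ 1 → G.edist a c ≤ 3 := by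
    intro a z1 z2 c e1 e2 e3
    calc G.edist a c ≤ G.edist a z1 + G.edist z1 c := G.edist_triangle
      _ ≤ G.edist a z1 + (G.edist z1 z2 + G.edist z2 c) := by
          gcongr; exact G.edist_triangle
      _ ≤ 1 + (1 + 1) := by gcongr
      _ = 3 := by norm_num
  -- projections
  have p1ne : ∀ {w : L}, ¬(b.repr w 0 = 0 ∧ b.repr w 1 = 0) →
      b.repr w 0 • b 0 + b.repr w 1 • b 1 ≠ 0 := by
    intro w h hz
    have e0 := congrArg (fun t => b.repr t 0) hz
    have e1 := congrArg (fun t => b.repr t 1) hz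
    simp [Finsupp.single_apply] at e0 e1
    exact h ⟨e0, e1⟩
  have p2ne : ∀ {w : L}, ¬(b.repr w 2 = 0 ∧ b.repr w 3 = 0) →
      b.repr w 2 • b 2 + b.repr w 3 • b 3 ≠ 0 := by
    intro w h hz
    have e0 := congrArg (fun t => b.repr t 2) hz
    have e1 := congrArg (fun t => b.repr t 3) hz
    simp [Finsupp.single_apply] at e0 e1
    exact h ⟨e0, e1⟩
  -- step to projection on first half
  have step1 : ∀ (w : L) (hw : w ∉ LieAlgebra.center F L)
      (hP : ¬(b.repr w 0 = 0 ∧ b.repr w 1 = 0)),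
      G.edist ⟨w, hw⟩ ⟨b.repr w 0 • b 0 + b.repr w 1 • b 1, hzero (p1ne hP)⟩ ≤ 1 := by
    intro w hw hP
    by_cases hQ : b.repr w 2 = 0 ∧ b.repr w 3 = 0
    · have : (⟨w, hw⟩ : {x : L // x ∉ LieAlgebra.center F L})
          = ⟨b.repr w 0 • b 0 + b.repr w 1 • b 1, hzero (p1ne hP)⟩ :=
        Subtype.ext (eq_proj1 b hQ.1 hQ.2)
      rw [this, SimpleGraph.edist_self]
      exact zero_le
    · apply dle1
      apply adj_of
      · intro he
        apply hQ
        have e2 := congrArg (fun t => b.repr t 2) he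
        have e3 := congrArg (fun t => b.repr t 3) he
        simp [Finsupp.single_apply] at e2 e3
        exact ⟨e2, e3⟩
      · simp [Finsupp.single_apply]; ring
      · simp [Finsupp.single_apply]
  have step2 : ∀ (w : L) (hw : w ∉ LieAlgebra.center F L)
      (hQ : ¬(b.repr w 2 = 0 ∧ b.repr w 3 = 0)),
      G.edist ⟨w, hw⟩ ⟨b.repr w 2 • b 2 + b.repr w 3 • b 3, hzero (p2ne hQ)⟩ ≤ 1 := by
    intro w hw hQ
    by_cases hP : b.repr w 0 = 0 ∧ b.repr w 1 = 0
    · have : (⟨w, hw⟩ : {x : L // x ∉ LieAlgebra.center F L})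
          = ⟨b.repr w 2 • b 2 + b.repr w 3 • b 3, hzero (p2ne hQ)⟩ :=
        Subtype.ext (eq_proj2 b hP.1 hP.2)
      rw [this, SimpleGraph.edist_self]
      exact zero_le
    · apply dle1
      apply adj_of
      · intro he
        apply hP
        have e0 := congrArg (fun t => b.repr t 0) he
        have e1 := congrArg (fun t => b.repr t 1) he
        simp [Finsupp.single_apply] at e0 e1
        exact ⟨e0, e1⟩
      · simp [Finsupp.single_apply]
      · simp [Finsupp.single_apply]; ring
  -- main upper bound
  have key : ∀ u v : {x : L // x ∉ LieAlgebra.center F L}, G.edist u v ≤ 3 := by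
    intro u v
    obtain ⟨x, hxc⟩ := u
    obtain ⟨y, hyc⟩ := v
    have hxne : x ≠ 0 := vert_ne_zero hxc
    have hyne : y ≠ 0 := vert_ne_zero hyc
    by_cases hA : b.repr x 0 = 0 ∧ b.repr x 1 = 0
    · -- x pure half 2
      have hQx : ¬(b.repr x 2 = 0 ∧ b.repr x 3 = 0) := by
        intro hB
        exact hxne (eq_zero_of_repr b (by intro i; fin_cases i <;>
          simp [hA.1, hA.2, hB.1, hB.2]))
      by_cases hC : b.repr y 0 = 0 ∧ b.repr y 1 = 0
      · -- both pure half 2 : through b 0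
        have hb0 : (b 0 : L) ≠ 0 := b.ne_zero 0
        refine tri3 _ ⟨b 0, hzero hb0⟩ ⟨b 0, hzero hb0⟩ _ ?_ ?_ ?_
        · apply dle1
          apply adj_of
          · intro he
            rw [he] at hA
            simpa using hA.1
          · simp [Finsupp.single_apply, hA.1, hA.2]
          · simp [Finsupp.single_apply]
        · rw [SimpleGraph.edist_self]; exact zero_le
        · apply dle1
          apply adj_of
          · intro he
            have := congrArg (fun t => b.repr t 0) he
            simp [Finsupp.single_apply, hC.1] at this
          · simp [Finsupp.single_apply, hC.1, hC.2]
          · simp [Finsupp.single_apply]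
      · -- x pure2, y has nonzero first half: x — p2 x — p1 y — y
        refine tri3 _ ⟨b.repr x 2 • b 2 + b.repr x 3 • b 3, hzero (p2ne hQx)⟩
          ⟨b.repr y 0 • b 0 + b.repr y 1 • b 1, hzero (p1ne hC)⟩ _ ?_ ?_ ?_
        · exact step2 x hxc hQx
        · apply dle1
          apply adj_of
          · intro he
            apply hQx
            have e2 := congrArg (fun t => b.repr t 2) he
            have e3 := congrArg (fun t => b.repr t 3) he
            simp [Finsupp.single_apply] at e2 e3
            exact ⟨e2, e3⟩
          · simp [Finsupp.single_apply]
          · simp [Finsupp.single_apply]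
        · rw [SimpleGraph.edist_comm]
          exact step1 y hyc hC
    · -- x has nonzero first half
      by_cases hD : b.repr y 2 = 0 ∧ b.repr y 3 = 0
      · -- y pure half 1
        have hPy : ¬(b.repr y 0 = 0 ∧ b.repr y 1 = 0) := by
          intro hC
          exact hyne (eq_zero_of_repr b (by intro i; fin_cases i <;>
            simp [hC.1, hC.2, hD.1, hD.2]))
        by_cases hB : b.repr x 2 = 0 ∧ b.repr x 3 = 0
        · -- both pure half 1 : through b 3
          have hb3 : (b 3 : L) ≠ 0 := b.ne_zero 3
          refine tri3 _ ⟨b 3, hzero hb3⟩ ⟨b 3, hzero hb3⟩ _ ?_ ?_ ?_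
          · apply dle1
            apply adj_of
            · intro he
              have := congrArg (fun t => b.repr t 3) he
              simp [Finsupp.single_apply, hB.2] at this
            · simp [Finsupp.single_apply]
            · simp [Finsupp.single_apply, hB.1, hB.2]
          · rw [SimpleGraph.edist_self]; exact zero_le
          · apply dle1
            apply SimpleGraph.Adj.symm
            apply adj_of
            · intro he
              have := congrArg (fun t => b.repr t 3) he
              simp [Finsupp.single_apply, hD.2] at this
            · simp [Finsupp.single_apply]
            · simp [Finsupp.single_apply, hD.1, hD.2]
        · -- x mixed/has second half, y pure half1: x — p2 x — p1 y — y
          refine tri3 _ ⟨b.repr x 2 • b 2 + b.repr x 3 • b 3, hzero (p2ne hB)⟩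
            ⟨b.repr y 0 • b 0 + b.repr y 1 • b 1, hzero (p1ne hPy)⟩ _ ?_ ?_ ?_
          · exact step2 x hxc hB
          · apply dle1
            apply adj_of
            · intro he
              apply hB
              have e2 := congrArg (fun t => b.repr t 2) he
              have e3 := congrArg (fun t => b.repr t 3) he
              simp [Finsupp.single_apply] at e2 e3
              exact ⟨e2, e3⟩
            · simp [Finsupp.single_apply]
            · simp [Finsupp.single_apply]
          · rw [SimpleGraph.edist_comm]
            exact step1 y hyc hPy
      · -- x has first half, y has second half: x — p1 x — p2 y — y
        refine tri3 _ ⟨b.repr x 0 • b 0 + b.repr x 1 • b 1, hzero (p1ne hA)⟩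
          ⟨b.repr y 2 • b 2 + b.repr y 3 • b 3, hzero (p2ne hD)⟩ _ ?_ ?_ ?_
        · exact step1 x hxc hA
        · apply dle1
          apply adj_of
          · intro he
            apply hA
            have e0 := congrArg (fun t => b.repr t 0) he
            have e1 := congrArg (fun t => b.repr t 1) he
            simp [Finsupp.single_apply] at e0 e1
            exact ⟨e0, e1⟩
          · simp [Finsupp.single_apply]
          · simp [Finsupp.single_apply]
        · rw [SimpleGraph.edist_comm]
          exact step2 y hyc hD
  -- connectedness
  have hconn : G.Connected := by
    rw [SimpleGraph.connected_iff]
    refine ⟨fun u v => ?_, ⟨⟨b 0, hzero (b.ne_zero 0)⟩⟩⟩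
    apply SimpleGraph.reachable_of_edist_ne_top
    exact ((key u v).trans_lt (lt_top_iff_ne_top.mpr (by decide))).ne
  refine ⟨hconn, ?_⟩
  -- the extremal pair
  have hXne : (b 0 + b 2 : L) ≠ 0 := by
    intro h
    have := congrArg (fun t => b.repr t 0) h
    simp [Finsupp.single_apply] at this
  have hYne : (b 1 + b 3 : L) ≠ 0 := by
    intro h
    have := congrArg (fun t => b.repr t 1) h
    simp [Finsupp.single_apply] at this
  have hd3 : G.edist ⟨b 0 + b 2, hzero hXne⟩ ⟨b 1 + b 3, hzero hYne⟩ = 3 := by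
    have hle := key ⟨b 0 + b 2, hzero hXne⟩ ⟨b 1 + b 3, hzero hYne⟩
    have hne0 : G.edist ⟨b 0 + b 2, hzero hXne⟩ ⟨b 1 + b 3, hzero hYne⟩ ≠ 0 := by
      rw [Ne, SimpleGraph.edist_eq_zero_iff]
      intro h
      have := congrArg (fun t => b.repr t 0) (Subtype.ext_iff.mp h)
      simp [Finsupp.single_apply] at this
    have hne1 : G.edist ⟨b 0 + b 2, hzero hXne⟩ ⟨b 1 + b 3, hzero hYne⟩ ≠ 1 := by
      rw [Ne, SimpleGraph.edist_eq_one_iff_adj]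
      intro h
      have h2 := (hbz _ _).mp h.2
      simp [Finsupp.single_apply] at h2
    have hne2 : G.edist ⟨b 0 + b 2, hzero hXne⟩ ⟨b 1 + b 3, hzero hYne⟩ ≠ 2 := by
      intro h2
      obtain ⟨z, ha, hb⟩ := adj_adj_of_edist_eq_two h2
      have ea := (hbz _ _).mp ha.2
      have eb := (hbz _ _).mp hb.2
      simp [Finsupp.single_apply] at ea eb
      apply vert_ne_zero z.2
      apply eq_zero_of_repr b
      intro i
      fin_cases i <;> simp [ea.1, ea.2, eb.1, eb.2]
    have hnetop : G.edist ⟨b 0 + b 2, hzero hXne⟩ ⟨b 1 + b 3, hzero hYne⟩ ≠ ⊤ :=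
      (hle.trans_lt (lt_top_iff_ne_top.mpr (by decide))).ne
    obtain ⟨n, hn⟩ : ∃ n : ℕ, G.edist ⟨b 0 + b 2, hzero hXne⟩ ⟨b 1 + b 3, hzero hYne⟩ = n :=
      ⟨_, (ENat.coe_toNat hnetop).symm⟩
    rw [hn] at hle hne0 hne1 hne2 ⊢
    have h3 : n ≤ 3 := by exact_mod_cast hle
    have e0 : n ≠ 0 := by exact_mod_cast hne0
    have e1 : n ≠ 1 := by exact_mod_cast hne1
    have e2 : n ≠ 2 := by exact_mod_cast hne2
    have : n = 3 := by omega
    exact_mod_cast this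
  apply le_antisymm
  · exact SimpleGraph.ediam_le_of_edist_le key
  · rw [← hd3]
    exact SimpleGraph.edist_le_ediam
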